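/- Let I be a stable ideal of an integral domain R, i.e., I is invertible as an ideal of the overring E = (I : I) = {x ∈ Frac(R) : xI ⊆ I}. Then the divisorial closure I_v = (R : (R : I)) satisfies I_v = I·(I_v : I_v), I_v is a stable ideal, and (I_v)^2 ⊆ I. -/

import Mathlib

theorem stmt_12_aux_mul_ne_zero {R : Type*} [CommRing R] [IsDomain R]
    {A B : FractionalIdeal (nonZeroDivisors R) (FractionRing R)}
    (hA : A ≠ 0) (hB : B ≠ 0) : A * B ≠ 0 := by
  obtain ⟨a, haA, ha⟩ : ∃ a ∈ A, a ≠ 0 := by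
    by_contra h; push_neg at h; exact hA (FractionalIdeal.eq_zero_iff.mpr h)
  obtain ⟨b, hbB, hb⟩ : ∃ b ∈ B, b ≠ 0 := by
    by_contra h; push_neg at h; exact hB (FractionalIdeal.eq_zero_iff.mpr h)
  intro h
  exact mul_ne_zero ha hb
    (FractionalIdeal.eq_zero_iff.mp h _ (FractionalIdeal.mul_mem_mul haA hbB))

open FractionalIdeal in
set_option maxHeartbeats 1000000 in
theorem stmt_12 {R : Type*} [CommRing R] [IsDomain R] (I : Ideal R) (hI : I ≠ ⊥)
    (J : FractionalIdeal (nonZeroDivisors R) (FractionRing R))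
    (hJ : J = (I : FractionalIdeal (nonZeroDivisors R) (FractionRing R)))
    (hstable : J * (J / (J * J)) = J / J)
    (Iv : FractionalIdeal (nonZeroDivisors R) (FractionRing R))
    (hIv : Iv = 1 / (1 / J)) :
    Iv = J * (Iv / Iv) ∧ Iv * (Iv / (Iv * Iv)) = Iv / Iv ∧ Iv * Iv ≤ J := by
  have hJ0 : J ≠ 0 := by rw [hJ]; exact coeIdeal_ne_zero.mpr hI
  have hJ1 : J ≤ 1 := by rw [hJ]; exact coeIdeal_le_one
  clear hJ hI
  obtain ⟨E, hEdef⟩ : ∃ E, J / J = E := ⟨_, rfl⟩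
  obtain ⟨T, hTdef⟩ : ∃ T, J / (J * J) = T := ⟨_, rfl⟩
  obtain ⟨L, hLdef⟩ : ∃ L, 1 / J = L := ⟨_, rfl⟩
  rw [hEdef, hTdef] at hstable
  rw [hLdef] at hIv
  obtain ⟨F, hFdef⟩ : ∃ F, 1 / E = F := ⟨_, rfl⟩
  obtain ⟨G, hGdef⟩ : ∃ G, 1 / F = G := ⟨_, rfl⟩
  have hJJ0 : J * J ≠ 0 := stmt_12_aux_mul_ne_zero hJ0 hJ0
  have hone0 : (1 : FractionalIdeal (nonZeroDivisors R) (FractionRing R)) ≠ 0 :=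
    fun h => hJ0 (le_antisymm (h ▸ hJ1) (zero_le _))
  have oneE : (1 : FractionalIdeal (nonZeroDivisors R) (FractionRing R)) ≤ E := by
    rw [← hEdef]; exact (le_div_iff_mul_le hJ0).mpr (by rw [one_mul])
  have hE0 : E ≠ 0 := fun h => hone0 (le_antisymm (h ▸ oneE) (zero_le _))
  have EJ : E * J = J := by
    refine le_antisymm (by rw [← hEdef]; exact (le_div_iff_mul_le hJ0).mp le_rfl) ?_
    calc J = 1 * J := (one_mul J).symm
      _ ≤ E * J := mul_le_mul_left oneE J
  have EE : E * E = E := by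
    refine le_antisymm ?_ ((mul_one E).symm.le.trans (mul_le_mul_right oneE E))
    rw [← hEdef]
    refine (le_div_iff_mul_le hJ0).mpr ?_
    rw [hEdef, mul_assoc, EJ]
    exact EJ.le
  have TJJ : T * (J * J) ≤ J := by
    rw [← hTdef]; exact (le_div_iff_mul_le hJJ0).mp le_rfl
  have oneL : (1 : FractionalIdeal (nonZeroDivisors R) (FractionRing R)) ≤ L := by
    rw [← hLdef]; exact (le_div_iff_mul_le hJ0).mpr (by rw [one_mul]; exact hJ1)
  have hL0 : L ≠ 0 := fun h => hone0 (le_antisymm (h ▸ oneL) (zero_le _))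
  have LJ : L * J ≤ 1 := by
    rw [← hLdef]; exact (le_div_iff_mul_le hJ0).mp le_rfl
  have JF : J ≤ F := by
    rw [← hFdef]; exact (le_div_iff_mul_le hE0).mpr (by rw [mul_comm, EJ]; exact hJ1)
  have hF0 : F ≠ 0 := fun h => hJ0 (le_antisymm (h ▸ JF) (zero_le _))
  have FE1 : F * E ≤ 1 := by
    rw [← hFdef]; exact (le_div_iff_mul_le hE0).mp le_rfl
  have FE : F * E = F := by
    refine le_antisymm (by rw [← hFdef]; exact (le_div_iff_mul_le hE0).mpr (by rw [mul_assoc, hFdef, EE]; exact FE1)) ?_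
    calc F = F * 1 := (mul_one F).symm
      _ ≤ F * E := mul_le_mul_right oneE F
  have hF1 : F ≤ 1 := FE ▸ FE1
  have oneG : (1 : FractionalIdeal (nonZeroDivisors R) (FractionRing R)) ≤ G := by
    rw [← hGdef]; exact (le_div_iff_mul_le hF0).mpr (by rw [one_mul]; exact hF1)
  have GF1 : G * F ≤ 1 := by
    rw [← hGdef]; exact (le_div_iff_mul_le hF0).mp le_rfl
  have GFF : G * F ≤ F := by
    rw [← hFdef]
    refine (le_div_iff_mul_le hE0).mpr ?_
    rw [hFdef, mul_assoc, FE]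
    exact GF1
  have GG : G * G = G := by
    refine le_antisymm ?_ ((mul_one G).symm.le.trans (mul_le_mul_right oneG G))
    rw [← hGdef]
    refine (le_div_iff_mul_le hF0).mpr ?_
    rw [hGdef]
    calc G * G * F = G * (G * F) := by ring
      _ ≤ G * F := mul_le_mul_right GFF G
      _ ≤ 1 := GF1
  have GE : G * E = G := by
    refine le_antisymm ?_ ?_
    · rw [← hGdef]
      refine (le_div_iff_mul_le hF0).mpr ?_
      rw [hGdef]
      calc G * E * F = G * (F * E) := by ring
        _ = G * F := by rw [FE]
        _ ≤ 1 := GF1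
    · calc G = G * 1 := (mul_one G).symm
        _ ≤ G * E := mul_le_mul_right oneE G
  have hGL : G ≤ L := by
    rw [← hLdef]
    exact (le_div_iff_mul_le hJ0).mpr
      (calc G * J ≤ G * F := mul_le_mul_right JF G
        _ ≤ 1 := GF1)
  have LT : L ≤ T := by
    rw [← hTdef]
    exact (le_div_iff_mul_le hJJ0).mpr
      (calc L * (J * J) = L * J * J := by ring
        _ ≤ 1 * J := mul_le_mul_left LJ J
        _ = J := one_mul J)
  have LJF : L * J ≤ F := by
    rw [← hFdef]
    exact (le_div_iff_mul_le hE0).mpr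
      (calc L * J * E = L * (E * J) := by ring
        _ = L * J := by rw [EJ]
        _ ≤ 1 := LJ)
  have FTL : F * T ≤ L := by
    rw [← hLdef]
    exact (le_div_iff_mul_le hJ0).mpr
      (calc F * T * J = F * (J * T) := by ring
        _ = F * E := by rw [hstable]
        _ = F := FE
        _ ≤ 1 := hF1)
  have L_le_FT : L ≤ F * T := by
    calc L = L * 1 := (mul_one L).symm
      _ ≤ L * E := mul_le_mul_right oneE L
      _ = L * (J * T) := by rw [hstable]
      _ = L * J * T := by ring
      _ ≤ F * T := mul_le_mul_left LJF T
  have IvL : Iv * L ≤ 1 := by rw [hIv]; exact (le_div_iff_mul_le hL0).mp le_rfl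
  have J_le_Iv : J ≤ Iv := by
    rw [hIv]
    exact (le_div_iff_mul_le hL0).mpr (by rw [mul_comm]; exact LJ)
  have hIv0 : Iv ≠ 0 := fun h => hJ0 (le_antisymm (h ▸ J_le_Iv) (zero_le _))
  have hIvIv0 : Iv * Iv ≠ 0 := stmt_12_aux_mul_ne_zero hIv0 hIv0
  have IvT_le_G : Iv * T ≤ G := by
    rw [← hGdef]
    exact (le_div_iff_mul_le hF0).mpr
      (calc Iv * T * F = Iv * (F * T) := by ring
        _ ≤ Iv * L := mul_le_mul_right FTL Iv
        _ ≤ 1 := IvL)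
  have Iv_eq_JG : Iv = J * G := by
    refine le_antisymm ?_ ?_
    · calc Iv = Iv * 1 := (mul_one Iv).symm
        _ ≤ Iv * E := mul_le_mul_right oneE Iv
        _ = Iv * (J * T) := by rw [hstable]
        _ = J * (Iv * T) := by ring
        _ ≤ J * G := mul_le_mul_right IvT_le_G J
    · rw [hIv]
      refine (le_div_iff_mul_le hL0).mpr ?_
      calc J * G * L ≤ J * G * (F * T) := mul_le_mul_right L_le_FT (J * G)
        _ = G * F * (J * T) := by ring
        _ = G * F * E := by rw [hstable]
        _ = G * (F * E) := by ring
        _ = G * F := by rw [FE]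
        _ ≤ 1 := GF1
  have GIv : G * Iv = Iv := by
    calc G * Iv = G * (J * G) := by rw [← Iv_eq_JG]
      _ = J * (G * G) := by ring
      _ = J * G := by rw [GG]
      _ = Iv := Iv_eq_JG.symm
  have IvT_eq_G : Iv * T = G := by
    refine le_antisymm IvT_le_G ?_
    calc G = 1 * G := (one_mul G).symm
      _ ≤ E * G := mul_le_mul_left oneE G
      _ = J * T * G := by rw [hstable]
      _ = (J * G) * T := by ring
      _ = Iv * T := by rw [← Iv_eq_JG]
  have E'_Iv : Iv / Iv * Iv ≤ Iv := (le_div_iff_mul_le hIv0).mp le_rfl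
  have G_le_E' : G ≤ Iv / Iv := (le_div_iff_mul_le hIv0).mpr GIv.le
  have E'_eq : Iv / Iv = G := by
    refine le_antisymm ?_ G_le_E'
    calc Iv / Iv = Iv / Iv * 1 := (mul_one _).symm
      _ ≤ Iv / Iv * G := mul_le_mul_right oneG _
      _ = Iv / Iv * (Iv * T) := by rw [IvT_eq_G]
      _ = (Iv / Iv * Iv) * T := by ring
      _ ≤ Iv * T := mul_le_mul_left E'_Iv T
      _ = G := IvT_eq_G
  refine ⟨?_, ?_, ?_⟩
  · rw [E'_eq, ← Iv_eq_JG]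
  · have T'Iv : Iv / (Iv * Iv) * (Iv * Iv) ≤ Iv := (le_div_iff_mul_le hIvIv0).mp le_rfl
    refine le_antisymm ((le_div_iff_mul_le hIv0).mpr ?_) ?_
    · calc Iv * (Iv / (Iv * Iv)) * Iv = Iv / (Iv * Iv) * (Iv * Iv) := by ring
        _ ≤ Iv := T'Iv
    · have TG_le : T * G ≤ Iv / (Iv * Iv) := by
        refine (le_div_iff_mul_le hIvIv0).mpr ?_
        calc T * G * (Iv * Iv) = (Iv * T) * (G * Iv) := by ring
          _ = Iv := by rw [IvT_eq_G, GIv, GIv]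
          _ ≤ Iv := le_rfl
      calc Iv / Iv = G := E'_eq
        _ = G * G := GG.symm
        _ = (Iv * T) * G := by rw [IvT_eq_G]
        _ = Iv * (T * G) := by ring
        _ ≤ Iv * (Iv / (Iv * Iv)) := mul_le_mul_right TG_le Iv
  · calc Iv * Iv = (J * G) * (J * G) := by rw [← Iv_eq_JG]
      _ = (J * J) * (G * G) := by ring
      _ = (J * J) * G := by rw [GG]
      _ ≤ (J * J) * T := mul_le_mul_right (hGL.trans LT) (J * J)
      _ = T * (J * J) := mul_comm _ _
      _ ≤ J := TJJ
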